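/- (Minkowski inequality for positive operators.) Let X be a Banach lattice of measurable functions on a measure space (Ω,Σ,μ) and let G : X → X be a positive linear operator (i.e., Gh ≥ 0 a.e. whenever h ≥ 0 a.e.). Then for every 1 < p < ∞ and all measurable functions h₁, h₂ : Ω → ℝ with |h₁|^p ∈ X and |h₂|^p ∈ X, the pointwise a.e. inequality (G(|h₁+h₂|^p))^{1/p} ≤ (G(|h₁|^p))^{1/p} + (G(|h₂|^p))^{1/p} holds. -/

import Mathlib

open MeasureTheory

/-- A Banach lattice of (a.e.-equivalence classes of) real-valued measurable
functions on a measure space `(Ω, μ)`: a linear subspace of `Ω →ₘ[μ] ℝ` with a complete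
norm satisfying the lattice (ideal) property. -/
structure BanachFunctionLattice (Ω : Type*) [MeasurableSpace Ω] (μ : MeasureTheory.Measure Ω) where
  carrier : Set (Ω →ₘ[μ] ℝ)
  norm : (Ω →ₘ[μ] ℝ) → ℝ
  zero_mem : 0 ∈ carrier
  add_mem : ∀ {f g}, f ∈ carrier → g ∈ carrier → f + g ∈ carrier
  smul_mem : ∀ (c : ℝ) {f}, f ∈ carrier → c • f ∈ carrier
  norm_nonneg : ∀ f ∈ carrier, 0 ≤ norm f
  norm_eq_zero_iff : ∀ f ∈ carrier, (norm f = 0 ↔ f = 0)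
  norm_add_le : ∀ f ∈ carrier, ∀ g ∈ carrier, norm (f + g) ≤ norm f + norm g
  norm_smul : ∀ (c : ℝ), ∀ f ∈ carrier, norm (c • f) = |c| * norm f
  ideal_mem : ∀ f ∈ carrier, ∀ g : (Ω →ₘ[μ] ℝ), |g| ≤ |f| → g ∈ carrier
  ideal_norm_le : ∀ f ∈ carrier, ∀ g : (Ω →ₘ[μ] ℝ), |g| ≤ |f| → norm g ≤ norm f
  complete : ∀ u : ℕ → (Ω →ₘ[μ] ℝ), (∀ n, u n ∈ carrier) →
    (∀ ε > 0, ∃ N, ∀ m ≥ N, ∀ n ≥ N, norm (u m - u n) < ε) →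
    ∃ f ∈ carrier, ∀ ε > 0, ∃ N, ∀ n ≥ N, norm (u n - f) < ε

variable {Ω : Type*} [MeasurableSpace Ω] {μ : MeasureTheory.Measure Ω}

/-- The a.e.-equivalence class of `ω ↦ |f ω| ^ p` (real power). -/
noncomputable def absRpow (p : ℝ) (f : Ω →ₘ[μ] ℝ) : Ω →ₘ[μ] ℝ :=
  AEEqFun.mk (fun ω => |f ω| ^ p)
    (((by measurability : Measurable fun x : ℝ => |x| ^ p).comp_aemeasurable
      f.aemeasurable).aestronglyMeasurable)

/-- A (not necessarily complete) normed function space: the data of a carrier and a norm.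
Used to speak about `p`-convexifications without re-proving all the axioms. -/
structure FunctionSpace (Ω : Type*) [MeasurableSpace Ω] (μ : MeasureTheory.Measure Ω) where
  carrier : Set (Ω →ₘ[μ] ℝ)
  norm : (Ω →ₘ[μ] ℝ) → ℝ

/-- The carrier-and-norm data underlying a Banach function lattice. -/
def BanachFunctionLattice.toFunctionSpace (X : BanachFunctionLattice Ω μ) :
    FunctionSpace Ω μ := ⟨X.carrier, X.norm⟩

/-- The `p`-convexification `X^(p)`: all `f` with `|f|^p ∈ X`, with norm `‖|f|^p‖_X^(1/p)`. -/
noncomputable def pConv (X : BanachFunctionLattice Ω μ) (p : ℝ) : FunctionSpace Ω μ where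
  carrier := {f | absRpow p f ∈ X.carrier}
  norm := fun f => (X.norm (absRpow p f)) ^ (1 / p)

/-- The sum space `X₀ + X₁` (as a set). -/
def sumSet (A₀ A₁ : FunctionSpace Ω μ) : Set (Ω →ₘ[μ] ℝ) :=
  {f | ∃ a₀ ∈ A₀.carrier, ∃ a₁ ∈ A₁.carrier, f = a₀ + a₁}

/-- The Peetre `K`-functional `K(t, f; A₀, A₁)`. -/
noncomputable def Kfun (A₀ A₁ : FunctionSpace Ω μ) (t : ℝ) (f : Ω →ₘ[μ] ℝ) : ℝ :=
  sInf {r | ∃ a₀ ∈ A₀.carrier, ∃ a₁ ∈ A₁.carrier,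
    f = a₀ + a₁ ∧ r = A₀.norm a₀ + t * A₁.norm a₁}

/-- The norm of the sum space `X₀ + X₁`, namely `K(1, ·)`. -/
noncomputable def sumNorm (A₀ A₁ : FunctionSpace Ω μ) (f : Ω →ₘ[μ] ℝ) : ℝ :=
  Kfun A₀ A₁ 1 f

/-- The functional `D(t, f; A₀, A₁)`, the analogue of the `K`-functional restricted to
disjointly supported decompositions. -/
noncomputable def Dfun (A₀ A₁ : FunctionSpace Ω μ) (t : ℝ) (f : Ω →ₘ[μ] ℝ) : ℝ :=
  sInf {r | ∃ a₀ ∈ A₀.carrier, ∃ a₁ ∈ A₁.carrier,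
    f = a₀ + a₁ ∧ a₀ * a₁ = 0 ∧ r = A₀.norm a₀ + t * A₁.norm a₁}

/-- `T : (A₀, A₁) → (A₀, A₁)` is a bounded linear operator: `T` is linear on `A₀ + A₁`
and its restriction to each `Aⱼ` is a bounded operator from `Aⱼ` into itself. -/
def IsBoundedCoupleOperator (A₀ A₁ : FunctionSpace Ω μ) (T : (Ω →ₘ[μ] ℝ) → (Ω →ₘ[μ] ℝ)) :
    Prop :=
  (∀ f ∈ sumSet A₀ A₁, ∀ g ∈ sumSet A₀ A₁, T (f + g) = T f + T g) ∧
  (∀ (c : ℝ), ∀ f ∈ sumSet A₀ A₁, T (c • f) = c • T f) ∧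
  (∀ f ∈ A₀.carrier, T f ∈ A₀.carrier) ∧
  (∀ f ∈ A₁.carrier, T f ∈ A₁.carrier) ∧
  (∃ C₀ : ℝ, ∀ f ∈ A₀.carrier, A₀.norm (T f) ≤ C₀ * A₀.norm f) ∧
  (∃ C₁ : ℝ, ∀ f ∈ A₁.carrier, A₁.norm (T f) ≤ C₁ * A₁.norm f)

/-- `‖T‖_{Aⱼ → Aⱼ} ≤ C` for `j = 0, 1`. -/
def CoupleOperatorNormLE (A₀ A₁ : FunctionSpace Ω μ) (T : (Ω →ₘ[μ] ℝ) → (Ω →ₘ[μ] ℝ))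
    (C : ℝ) : Prop :=
  (∀ f ∈ A₀.carrier, A₀.norm (T f) ≤ C * A₀.norm f) ∧
  (∀ f ∈ A₁.carrier, A₁.norm (T f) ≤ C * A₁.norm f)

/-- `T` is a positive operator on `A₀ + A₁`. -/
def IsPositiveOn (A₀ A₁ : FunctionSpace Ω μ) (T : (Ω →ₘ[μ] ℝ) → (Ω →ₘ[μ] ℝ)) : Prop :=
  ∀ h ∈ sumSet A₀ A₁, 0 ≤ h → 0 ≤ T h

/-- `(A₀, A₁)` is a Calderón couple. -/
def IsCalderonCouple (A₀ A₁ : FunctionSpace Ω μ) : Prop :=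
  ∀ f ∈ sumSet A₀ A₁, ∀ g ∈ sumSet A₀ A₁,
    (∀ t > 0, Kfun A₀ A₁ t g ≤ Kfun A₀ A₁ t f) →
    ∃ T, IsBoundedCoupleOperator A₀ A₁ T ∧ T f = g

/-- `(A₀, A₁)` is a `C`-Calderón couple. -/
def IsCCalderonCouple (A₀ A₁ : FunctionSpace Ω μ) (C : ℝ) : Prop :=
  ∀ f ∈ sumSet A₀ A₁, ∀ g ∈ sumSet A₀ A₁,
    (∀ t > 0, Kfun A₀ A₁ t g ≤ Kfun A₀ A₁ t f) →
    ∃ T, IsBoundedCoupleOperator A₀ A₁ T ∧ T f = g ∧ CoupleOperatorNormLE A₀ A₁ T C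

/-- `(A₀, A₁)` is a positive Calderón couple. -/
def IsPositiveCalderonCouple (A₀ A₁ : FunctionSpace Ω μ) : Prop :=
  ∀ f ∈ sumSet A₀ A₁, ∀ g ∈ sumSet A₀ A₁, 0 ≤ f → 0 ≤ g →
    (∀ t > 0, Kfun A₀ A₁ t g ≤ Kfun A₀ A₁ t f) →
    ∃ T, IsBoundedCoupleOperator A₀ A₁ T ∧ IsPositiveOn A₀ A₁ T ∧ T f = g

/-- `(A₀, A₁)` is a positive `C`-Calderón couple. -/
def IsPositiveCCalderonCouple (A₀ A₁ : FunctionSpace Ω μ) (C : ℝ) : Prop :=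
  ∀ f ∈ sumSet A₀ A₁, ∀ g ∈ sumSet A₀ A₁, 0 ≤ f → 0 ≤ g →
    (∀ t > 0, Kfun A₀ A₁ t g ≤ Kfun A₀ A₁ t f) →
    ∃ T, IsBoundedCoupleOperator A₀ A₁ T ∧ IsPositiveOn A₀ A₁ T ∧ T f = g ∧
      CoupleOperatorNormLE A₀ A₁ T C

/-- A set `S` of (classes of) measurable functions has the Least Upper Bound Property:
every nonempty subset of `S` bounded above by an element of `S` has a least upper bound
in `S` (for the a.e. pointwise order). -/
def HasLUBP (S : Set (Ω →ₘ[μ] ℝ)) : Prop :=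
  ∀ A ⊆ S, A.Nonempty → (∃ b ∈ S, ∀ a ∈ A, a ≤ b) →
    ∃ y ∈ S, (∀ a ∈ A, a ≤ y) ∧ ∀ z ∈ S, (∀ a ∈ A, a ≤ z) → y ≤ z


section Aux

open Filter Real

private lemma aux_convex {p : ℝ} (hp : 1 < p) {u v t : ℝ} (hu : 0 ≤ u) (hv : 0 ≤ v)
    (ht0 : 0 < t) (ht1 : t < 1) :
    (u + v) ^ p ≤ t ^ (1 - p) * u ^ p + (1 - t) ^ (1 - p) * v ^ p := by
  have h1t : 0 < 1 - t := by linarith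
  have hconv := (convexOn_rpow hp.le).2 (x := u / t) (y := v / (1 - t))
    (Set.mem_Ici.mpr (by positivity)) (Set.mem_Ici.mpr (by positivity))
    ht0.le h1t.le (by ring)
  have he : t • (u / t) + (1 - t) • (v / (1 - t)) = u + v := by
    simp only [smul_eq_mul]
    field_simp
  rw [he] at hconv
  refine hconv.trans_eq ?_
  simp only [smul_eq_mul]
  rw [Real.div_rpow hu ht0.le, Real.div_rpow hv h1t.le,
    Real.rpow_sub ht0, Real.rpow_sub h1t, Real.rpow_one, Real.rpow_one]
  ring

private lemma key_ineq {p : ℝ} (hp : 1 < p) (x y t : ℝ) (ht0 : 0 < t) (ht1 : t < 1) :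
    |x + y| ^ p ≤ t ^ (1 - p) * |x| ^ p + (1 - t) ^ (1 - p) * |y| ^ p :=
  calc |x + y| ^ p ≤ (|x| + |y|) ^ p :=
        Real.rpow_le_rpow (abs_nonneg _) (abs_add_le x y) (by linarith)
    _ ≤ _ := aux_convex hp (abs_nonneg x) (abs_nonneg y) ht0 ht1

private lemma rpow_subadd {a b r : ℝ} (ha : 0 ≤ a) (hb : 0 ≤ b) (hr0 : 0 ≤ r) (hr1 : r ≤ 1) :
    (a + b) ^ r ≤ a ^ r + b ^ r := by
  lift a to NNReal using ha
  lift b to NNReal using hb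
  exact_mod_cast NNReal.rpow_add_le_add_rpow a b hr0 hr1

private lemma real_of_rat {p a b c : ℝ}
    (h : ∀ q : ℚ, 0 < (q : ℝ) → (q : ℝ) < 1 →
      c ≤ (q : ℝ) ^ (1 - p) * a + (1 - (q : ℝ)) ^ (1 - p) * b)
    {x : ℝ} (hx0 : 0 < x) (hx1 : x < 1) :
    c ≤ x ^ (1 - p) * a + (1 - x) ^ (1 - p) * b := by
  have hchoice : ∀ n : ℕ, ∃ q : ℚ, x < (q : ℝ) ∧ (q : ℝ) < x + (1 - x) / (n + 2) := by
    intro n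
    apply exists_rat_btwn
    have h2 : (0 : ℝ) < ((n : ℝ) + 2) := by positivity
    have : (0 : ℝ) < (1 - x) / (n + 2) := div_pos (by linarith) h2
    linarith
  choose q hq1 hq2 using hchoice
  have hub : Tendsto (fun n : ℕ => x + (1 - x) / (n + 2)) atTop (nhds x) := by
    have h1 : Tendsto (fun n : ℕ => ((n : ℝ) + 2)) atTop atTop :=
      tendsto_natCast_atTop_atTop.atTop_add tendsto_const_nhds
    have h2 : Tendsto (fun n : ℕ => (1 - x) / ((n : ℝ) + 2)) atTop (nhds 0) :=
      Tendsto.div_atTop tendsto_const_nhds h1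
    simpa using tendsto_const_nhds.add h2
  have htend : Tendsto (fun n : ℕ => ((q n : ℝ))) atTop (nhds x) :=
    tendsto_of_tendsto_of_tendsto_of_le_of_le tendsto_const_nhds hub
      (fun n => (hq1 n).le) (fun n => (hq2 n).le)
  have hF : ContinuousAt (fun y : ℝ => y ^ (1 - p) * a + (1 - y) ^ (1 - p) * b) x := by
    apply ContinuousAt.add
    · exact (Real.continuousAt_rpow_const x (1 - p) (Or.inl hx0.ne')).mul continuousAt_const
    · exact (((Real.continuousAt_rpow_const (1 - x) (1 - p)
        (Or.inl (by intro hh; linarith [hh]))).comp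
          (continuousAt_const.sub continuousAt_id))).mul continuousAt_const
  refine ge_of_tendsto (hF.tendsto.comp htend) (Filter.Eventually.of_forall fun n => ?_)
  have hlt1 : (q n : ℝ) < 1 := by
    have h2 : (1 - x) / ((n : ℝ) + 2) ≤ (1 - x) / 2 := by
      apply div_le_div_of_nonneg_left (by linarith) (by norm_num)
      have : (0 : ℝ) ≤ (n : ℝ) := Nat.cast_nonneg n
      linarith
    have := hq2 n
    linarith
  exact h (q n) (hx0.trans (hq1 n)) hlt1

private lemma pt_main {p : ℝ} (hp : 1 < p) {a b c : ℝ} (ha : 0 ≤ a) (hb : 0 ≤ b) (hc : 0 ≤ c)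
    (h : ∀ q : ℚ, 0 < (q : ℝ) → (q : ℝ) < 1 →
      c ≤ (q : ℝ) ^ (1 - p) * a + (1 - (q : ℝ)) ^ (1 - p) * b) :
    c ^ (1 / p) ≤ a ^ (1 / p) + b ^ (1 / p) := by
  have hp0 : (0 : ℝ) < p := by linarith
  have hpne : p ≠ 0 := ne_of_gt hp0
  have hip0 : (0 : ℝ) ≤ 1 / p := by positivity
  have hip1 : 1 / p ≤ 1 := by
    rw [div_le_one hp0]; linarith
  refine le_of_forall_pos_le_add fun δ hδ => ?_
  have hε : (0 : ℝ) < (δ / 2) ^ p := Real.rpow_pos_of_pos (by linarith) p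
  set ε := (δ / 2) ^ p with hεdef
  have ha' : 0 < a + ε := by linarith
  have hb' : 0 < b + ε := by linarith
  set A := (a + ε) ^ (1 / p) with hAdef
  set B := (b + ε) ^ (1 / p) with hBdef
  have hA : 0 < A := Real.rpow_pos_of_pos ha' _
  have hB : 0 < B := Real.rpow_pos_of_pos hb' _
  have hs : 0 < A + B := by linarith
  set t := A / (A + B) with htdef
  have ht0 : 0 < t := div_pos hA hs
  have ht1 : t < 1 := (div_lt_one hs).2 (by linarith)
  have h1t : 1 - t = B / (A + B) := by
    rw [htdef]; field_simp; ring
  have key : ∀ u : ℝ, 0 < u →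
      (u ^ (1 / p) / (A + B)) ^ (1 - p) * u = u ^ (1 / p) * (A + B) ^ (p - 1) := by
    intro u hu
    have e2 : (A + B) ^ (1 - p) = ((A + B) ^ (p - 1))⁻¹ := by
      rw [show (1 - p) = -(p - 1) by ring, Real.rpow_neg hs.le]
    have e1 : u ^ (1 / p) = u ^ (1 / p * (1 - p)) * u := by
      conv_lhs => rw [show (1 / p) = 1 / p * (1 - p) + 1 by field_simp; ring]
      rw [Real.rpow_add hu, Real.rpow_one]
    rw [Real.div_rpow (Real.rpow_nonneg hu.le _) hs.le, ← Real.rpow_mul hu.le, e2,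
      div_eq_mul_inv, inv_inv, e1]
    ring
  have k1 := key (a + ε) ha'
  have k2 := key (b + ε) hb'
  rw [← hAdef] at k1
  rw [← hBdef] at k2
  have hc' : c ≤ t ^ (1 - p) * (a + ε) + (1 - t) ^ (1 - p) * (b + ε) := by
    have hr := real_of_rat h ht0 ht1
    have hk1 : (0 : ℝ) ≤ t ^ (1 - p) := Real.rpow_nonneg ht0.le _
    have hk2 : (0 : ℝ) ≤ (1 - t) ^ (1 - p) := Real.rpow_nonneg (by linarith) _
    nlinarith [hε]
  have hcompute : t ^ (1 - p) * (a + ε) + (1 - t) ^ (1 - p) * (b + ε) = (A + B) ^ p := by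
    rw [h1t, htdef, k1, k2, show (A + B) ^ p = (A + B) ^ (1 + (p - 1)) by ring_nf,
      Real.rpow_add hs, Real.rpow_one]
    ring
  have hcs : c ≤ (A + B) ^ p := hc'.trans_eq hcompute
  have hc2 : c ^ (1 / p) ≤ A + B := by
    calc c ^ (1 / p) ≤ ((A + B) ^ p) ^ (1 / p) :=
          Real.rpow_le_rpow hc hcs hip0
      _ = (A + B) ^ (p * (1 / p)) := (Real.rpow_mul hs.le p (1 / p)).symm
      _ = A + B := by rw [mul_one_div, div_self hpne, Real.rpow_one]
  have hεr : ε ^ (1 / p) = δ / 2 := by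
    rw [hεdef, ← Real.rpow_mul (by linarith : (0:ℝ) ≤ δ / 2), mul_one_div, div_self hpne,
      Real.rpow_one]
  have hAle : A ≤ a ^ (1 / p) + δ / 2 := by
    rw [hAdef]
    calc (a + ε) ^ (1 / p) ≤ a ^ (1 / p) + ε ^ (1 / p) := rpow_subadd ha hε.le hip0 hip1
      _ = a ^ (1 / p) + δ / 2 := by rw [hεr]
  have hBle : B ≤ b ^ (1 / p) + δ / 2 := by
    rw [hBdef]
    calc (b + ε) ^ (1 / p) ≤ b ^ (1 / p) + ε ^ (1 / p) := rpow_subadd hb hε.le hip0 hip1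
      _ = b ^ (1 / p) + δ / 2 := by rw [hεr]
  linarith

end Aux

private lemma G_mono (X : BanachFunctionLattice Ω μ) (G : (Ω →ₘ[μ] ℝ) → (Ω →ₘ[μ] ℝ))
    (hadd : ∀ f ∈ X.carrier, ∀ g ∈ X.carrier, G (f + g) = G f + G g)
    (hposG : ∀ f ∈ X.carrier, 0 ≤ f → 0 ≤ G f)
    {f g : Ω →ₘ[μ] ℝ} (hf : f ∈ X.carrier) (hg : g ∈ X.carrier) (hfg : f ≤ g) :
    G f ≤ G g := by
  have hsub : g - f ∈ X.carrier := by
    have := X.add_mem hg (X.smul_mem (-1 : ℝ) hf)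
    rwa [neg_one_smul, ← sub_eq_add_neg] at this
  have hsub_nonneg : (0 : Ω →ₘ[μ] ℝ) ≤ g - f := by
    rw [← AEEqFun.coeFn_le] at hfg ⊢
    filter_upwards [hfg, AEEqFun.coeFn_sub g f,
      AEEqFun.coeFn_zero (β := ℝ) (μ := μ)] with ω e1 e2 e3
    rw [e2, e3, Pi.sub_apply, Pi.zero_apply]
    linarith
  have h0 : 0 ≤ G (g - f) := hposG _ hsub hsub_nonneg
  have heq : G g = G f + G (g - f) := by
    have := hadd f hf (g - f) hsub
    rw [add_sub_cancel] at this
    exact this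
  rw [heq, ← AEEqFun.coeFn_le]
  rw [← AEEqFun.coeFn_le] at h0
  filter_upwards [h0, AEEqFun.coeFn_add (G f) (G (g - f)),
    AEEqFun.coeFn_zero (β := ℝ) (μ := μ)] with ω e1 e2 e3
  rw [e3] at e1
  rw [e2, Pi.add_apply]
  simp only [Pi.zero_apply] at e1
  linarith

/-- **Minkowski inequality for positive operators.** If `G : X → X` is a
positive linear operator on a Banach lattice of measurable functions `X`, then for every
`1 < p < ∞` and all measurable `h₁, h₂` with `|h₁|^p, |h₂|^p ∈ X` one has, pointwise a.e.,
`(G(|h₁ + h₂|^p))^(1/p) ≤ (G(|h₁|^p))^(1/p) + (G(|h₂|^p))^(1/p)`. -/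
theorem minkowski_for_positive_operators
    (X : BanachFunctionLattice Ω μ) (G : (Ω →ₘ[μ] ℝ) → (Ω →ₘ[μ] ℝ))
    (hmaps : ∀ f ∈ X.carrier, G f ∈ X.carrier)
    (hadd : ∀ f ∈ X.carrier, ∀ g ∈ X.carrier, G (f + g) = G f + G g)
    (hsmul : ∀ (c : ℝ), ∀ f ∈ X.carrier, G (c • f) = c • G f)
    (hposG : ∀ f ∈ X.carrier, 0 ≤ f → 0 ≤ G f)
    (p : ℝ) (hp : 1 < p) (h₁ h₂ : Ω →ₘ[μ] ℝ)
    (hh₁ : absRpow p h₁ ∈ X.carrier) (hh₂ : absRpow p h₂ ∈ X.carrier) :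
    absRpow (1 / p) (G (absRpow p (h₁ + h₂)))
      ≤ absRpow (1 / p) (G (absRpow p h₁)) + absRpow (1 / p) (G (absRpow p h₂)) := by
  classical
  have hp0 : (0 : ℝ) < p := by linarith
  have hcoe : ∀ (r : ℝ) (f : Ω →ₘ[μ] ℝ), ⇑(absRpow r f) =ᵐ[μ] fun ω => |f ω| ^ r := by
    intro r f
    exact AEEqFun.coeFn_mk _ _
  have habs_nonneg : ∀ (r : ℝ) (f : Ω →ₘ[μ] ℝ), (0 : Ω →ₘ[μ] ℝ) ≤ absRpow r f := by
    intro r f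
    rw [← AEEqFun.coeFn_le]
    filter_upwards [hcoe r f, AEEqFun.coeFn_zero (β := ℝ) (μ := μ)] with ω e1 e2
    rw [e1, e2, Pi.zero_apply]
    exact Real.rpow_nonneg (abs_nonneg _) r
  have hhalf : (0 : ℝ) < (1 / 2 : ℝ) := by norm_num
  have hCmem : absRpow p (h₁ + h₂) ∈ X.carrier := by
    have hD : ((1 / 2 : ℝ) ^ (1 - p)) • (absRpow p h₁ + absRpow p h₂) ∈ X.carrier :=
      X.smul_mem _ (X.add_mem hh₁ hh₂)
    refine X.ideal_mem _ hD (absRpow p (h₁ + h₂)) ?_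
    rw [← AEEqFun.coeFn_le]
    filter_upwards [hcoe p h₁, hcoe p h₂, hcoe p (h₁ + h₂),
      AEEqFun.coeFn_abs (absRpow p (h₁ + h₂)),
      AEEqFun.coeFn_abs (((1 / 2 : ℝ) ^ (1 - p)) • (absRpow p h₁ + absRpow p h₂)),
      AEEqFun.coeFn_smul ((1 / 2 : ℝ) ^ (1 - p)) (absRpow p h₁ + absRpow p h₂),
      AEEqFun.coeFn_add (absRpow p h₁) (absRpow p h₂),
      AEEqFun.coeFn_add h₁ h₂] with ω e1 e2 e3 e4 e5 e6 e7 e8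
    rw [e4, e5, e6, Pi.smul_apply, smul_eq_mul, e7, Pi.add_apply, e1, e2, e3, e8,
      Pi.add_apply]
    have hk := key_ineq hp (h₁ ω) (h₂ ω) (1 / 2) hhalf (by norm_num)
    have h12 : (1 : ℝ) - 1 / 2 = 1 / 2 := by norm_num
    rw [h12] at hk
    calc |(|h₁ ω + h₂ ω| ^ p)| = |h₁ ω + h₂ ω| ^ p :=
          abs_of_nonneg (Real.rpow_nonneg (abs_nonneg _) p)
      _ ≤ (1 / 2 : ℝ) ^ (1 - p) * (|h₁ ω| ^ p + |h₂ ω| ^ p) := by nlinarith [hk]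
      _ ≤ |(1 / 2 : ℝ) ^ (1 - p) * (|h₁ ω| ^ p + |h₂ ω| ^ p)| := le_abs_self _
  have hGA := hmaps _ hh₁
  have hGB := hmaps _ hh₂
  have hGC := hmaps _ hCmem
  have hpos_ae : ∀ (f : Ω →ₘ[μ] ℝ), f ∈ X.carrier → (0 : Ω →ₘ[μ] ℝ) ≤ f →
      ∀ᵐ ω ∂μ, 0 ≤ (G f) ω := by
    intro f hf hf0
    have h0 : (0 : Ω →ₘ[μ] ℝ) ≤ G f := hposG _ hf hf0
    rw [← AEEqFun.coeFn_le] at h0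
    filter_upwards [h0, AEEqFun.coeFn_zero (β := ℝ) (μ := μ)] with ω e1 e2
    rw [e2, Pi.zero_apply] at e1
    exact e1
  have hApos := hpos_ae _ hh₁ (habs_nonneg p h₁)
  have hBpos := hpos_ae _ hh₂ (habs_nonneg p h₂)
  have hCpos := hpos_ae _ hCmem (habs_nonneg p (h₁ + h₂))
  have hq_ae : ∀ q : ℚ, 0 < (q : ℝ) → (q : ℝ) < 1 →
      ∀ᵐ ω ∂μ, (G (absRpow p (h₁ + h₂))) ω ≤
        (q : ℝ) ^ (1 - p) * (G (absRpow p h₁)) ω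
          + (1 - (q : ℝ)) ^ (1 - p) * (G (absRpow p h₂)) ω := by
    intro q hq0 hq1
    set c₁ := (q : ℝ) ^ (1 - p) with hc₁
    set c₂ := (1 - (q : ℝ)) ^ (1 - p) with hc₂
    have hmemA : c₁ • absRpow p h₁ ∈ X.carrier := X.smul_mem _ hh₁
    have hmemB : c₂ • absRpow p h₂ ∈ X.carrier := X.smul_mem _ hh₂
    have hmem : c₁ • absRpow p h₁ + c₂ • absRpow p h₂ ∈ X.carrier := X.add_mem hmemA hmemB
    have hle : absRpow p (h₁ + h₂) ≤ c₁ • absRpow p h₁ + c₂ • absRpow p h₂ := by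
      rw [← AEEqFun.coeFn_le]
      filter_upwards [hcoe p h₁, hcoe p h₂, hcoe p (h₁ + h₂), AEEqFun.coeFn_add h₁ h₂,
        AEEqFun.coeFn_add (c₁ • absRpow p h₁) (c₂ • absRpow p h₂),
        AEEqFun.coeFn_smul c₁ (absRpow p h₁),
        AEEqFun.coeFn_smul c₂ (absRpow p h₂)] with ω e1 e2 e3 e4 e5 e6 e7
      rw [e3, e4, Pi.add_apply, e5, Pi.add_apply, e6, e7, Pi.smul_apply, Pi.smul_apply,
        smul_eq_mul, smul_eq_mul, e1, e2]
      exact key_ineq hp (h₁ ω) (h₂ ω) (q : ℝ) hq0 hq1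
    have hGle : G (absRpow p (h₁ + h₂)) ≤ G (c₁ • absRpow p h₁ + c₂ • absRpow p h₂) :=
      G_mono X G hadd hposG hCmem hmem hle
    have heq : G (c₁ • absRpow p h₁ + c₂ • absRpow p h₂)
        = c₁ • G (absRpow p h₁) + c₂ • G (absRpow p h₂) := by
      rw [hadd _ hmemA _ hmemB, hsmul c₁ _ hh₁, hsmul c₂ _ hh₂]
    rw [heq, ← AEEqFun.coeFn_le] at hGle
    filter_upwards [hGle, AEEqFun.coeFn_add (c₁ • G (absRpow p h₁)) (c₂ • G (absRpow p h₂)),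
      AEEqFun.coeFn_smul c₁ (G (absRpow p h₁)),
      AEEqFun.coeFn_smul c₂ (G (absRpow p h₂))] with ω e1 e2 e3 e4
    rw [e2, Pi.add_apply, e3, e4, Pi.smul_apply, Pi.smul_apply, smul_eq_mul,
      smul_eq_mul] at e1
    exact e1
  have hall : ∀ᵐ ω ∂μ, ∀ q : ℚ, 0 < (q : ℝ) → (q : ℝ) < 1 →
      (G (absRpow p (h₁ + h₂))) ω ≤
        (q : ℝ) ^ (1 - p) * (G (absRpow p h₁)) ω
          + (1 - (q : ℝ)) ^ (1 - p) * (G (absRpow p h₂)) ω := by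
    rw [MeasureTheory.ae_all_iff]
    intro q
    by_cases hq0 : 0 < (q : ℝ)
    · by_cases hq1 : (q : ℝ) < 1
      · filter_upwards [hq_ae q hq0 hq1] with ω hω _ _
        exact hω
      · filter_upwards with ω h0 h1
        exact absurd h1 hq1
    · filter_upwards with ω h0 h1
      exact absurd h0 hq0
  rw [← AEEqFun.coeFn_le]
  filter_upwards [hall, hApos, hBpos, hCpos, hcoe (1 / p) (G (absRpow p (h₁ + h₂))),
    hcoe (1 / p) (G (absRpow p h₁)), hcoe (1 / p) (G (absRpow p h₂)),
    AEEqFun.coeFn_add (absRpow (1 / p) (G (absRpow p h₁)))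
      (absRpow (1 / p) (G (absRpow p h₂)))] with ω h1 h2 h3 h4 e1 e2 e3 e4
  rw [e1, e4, Pi.add_apply, e2, e3, abs_of_nonneg h4, abs_of_nonneg h2, abs_of_nonneg h3]
  exact pt_main hp h2 h3 h4 h1
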